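/- Let P be a finite poset, n ≥ 1, and 𝒥 a poset ideal of Hom(P,[n]). If φ ∈ 𝒥 and ψ ∈ Hom(P,[n]) ∖ 𝒥, then Λψ ∩ Γφ is nonempty. -/

import Mathlib

/-- If `𝒥` is a poset ideal of `Hom(P,[n])`, `φ ∈ 𝒥` and `ψ ∈ Hom(P,[n]) ∖ 𝒥`,
then `Λψ ∩ Γφ` is nonempty. -/
theorem lambda_meets_graph
    {P : Type*} [PartialOrder P] [Fintype P]
    (n : ℕ) (hn : 1 ≤ n)
    (𝒥 : Set (P → Fin n))
    (h𝒥mono : ∀ φ ∈ 𝒥, Monotone φ)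
    (h𝒥down : ∀ φ ∈ 𝒥, ∀ ψ : P → Fin n, Monotone ψ → (∀ p, ψ p ≤ φ p) → ψ ∈ 𝒥)
    (φ : P → Fin n) (hφ : φ ∈ 𝒥)
    (ψ : P → Fin n) (hψmono : Monotone ψ) (hψ : ψ ∉ 𝒥) :
    ({v : P × Fin n | v.2 < ψ v.1 ∧ ∀ q : P, q < v.1 → ψ q ≤ v.2} ∩
      {v : P × Fin n | v.2 = φ v.1}).Nonempty := by
  have hφmono := h𝒥mono φ hφ
  -- the set where φ < ψ is nonempty
  have hS : {p : P | φ p < ψ p}.Nonempty := by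
    by_contra h
    exact hψ (h𝒥down φ hφ ψ hψmono (fun p => le_of_not_gt fun hlt => h ⟨p, hlt⟩))
  obtain ⟨p, hp, hmin⟩ : ∃ a ∈ {p : P | φ p < ψ p}, ∀ a' ∈ {p : P | φ p < ψ p}, id a' ≤ id a → id a = id a' := by
    obtain ⟨a, ha⟩ := (Set.toFinite {p : P | φ p < ψ p}).exists_minimal hS
    exact ⟨a, ha.1, fun b hb hba => (le_antisymm hba (ha.2 hb hba)).symm⟩
  refine ⟨(p, φ p), ⟨hp, ?_⟩, rfl⟩
  intro q hq
  by_cases hqS : φ q < ψ q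
  · exact absurd (hmin q hqS hq.le) hq.ne'
  · exact le_trans (le_of_not_gt hqS) (hφmono hq.le)
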